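/- Let p ≥ 11 be a prime and let a, b, c be nonzero elements of O_K, coprime in O_K, with a^p + b^p + c^p = 0 and with 2 not dividing a·b·c. Set A = a^p, B = b^p, C = c^p, and suppose the pair (A mod 4, B mod 4) is one of (3, u²), (1, u), (1, u² + 2u) modulo 4·O_K. Let v denote the valuation on O_K attached to the prime ideal 2·O_K. Then v(16·(A² + A·B + B²)) = 5, v(−32·(A − B)·(B − C)·(C − A)) = 5, and v(16·(A·B·C)²) = 4. -/

import Mathlib

open Polynomial

/-- `K = ℚ(√5)`, the real quadratic field obtained by adjoining `√5` to `ℚ`. -/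
noncomputable def K : IntermediateField ℚ ℝ := IntermediateField.adjoin ℚ {Real.sqrt 5}

/-- `O_K`, the ring of integers of `K = ℚ(√5)`. -/
noncomputable abbrev OK : Type := NumberField.RingOfIntegers K

lemma sqrt5_mem : Real.sqrt 5 ∈ K :=
  IntermediateField.subset_adjoin ℚ {Real.sqrt 5} rfl

/-- `(1 + √5)/2` as an element of `K`. -/
noncomputable def uK : K :=
  ⟨(1 + Real.sqrt 5) / 2,
    div_mem (add_mem (one_mem K) sqrt5_mem)
      (by exact_mod_cast SubfieldClass.ratCast_mem K 2)⟩

lemma uK_integral : IsIntegral ℤ uK := by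
  have h : IsIntegral ℤ ((1 + Real.sqrt 5) / 2 : ℝ) := by
    refine ⟨X ^ 2 - X - 1, by monicity!, ?_⟩
    have h5 : Real.sqrt 5 ^ 2 = 5 := Real.sq_sqrt (by norm_num)
    simp only [eval₂_sub, eval₂_pow, eval₂_X, eval₂_one]
    nlinarith [h5]
  rw [show ((1 + Real.sqrt 5) / 2 : ℝ) = algebraMap K ℝ uK from rfl] at h
  exact (isIntegral_algebraMap_iff (algebraMap K ℝ).injective).mp h

/-- `u = (1 + √5)/2` as an element of `O_K`; it satisfies `u ^ 2 = 1 + u`. -/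
noncomputable def u : OK := ⟨uK, uK_integral⟩


set_option synthInstance.maxHeartbeats 1000000
set_option maxHeartbeats 4000000

lemma uK_sq : uK ^ 2 = 1 + uK := by
  have h5 : Real.sqrt 5 ^ 2 = 5 := Real.sq_sqrt (by norm_num)
  apply Subtype.ext
  push_cast
  show ((1 + Real.sqrt 5) / 2) ^ 2 = 1 + (1 + Real.sqrt 5) / 2
  nlinarith [h5]

lemma coe_u : (algebraMap OK K) u = uK := rfl

lemma hu : u ^ 2 = 1 + u := by
  apply NumberField.RingOfIntegers.ext
  rw [NumberField.RingOfIntegers.coe_eq_algebraMap, NumberField.RingOfIntegers.coe_eq_algebraMap,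
    map_pow, map_add, map_one, coe_u]
  exact uK_sq

lemma not2dvd1 : ¬ (2 : OK) ∣ 1 := by
  rintro ⟨t, ht⟩
  have ht' : (1 : K) = 2 * (algebraMap OK K t) := by
    have h := congrArg (algebraMap OK K) ht
    rw [map_one, map_mul, map_ofNat] at h
    exact h
  have hint : IsIntegral ℤ ((algebraMap OK K t)) := t.2
  have heq : (algebraMap OK K t) = algebraMap ℚ K (1/2) := by
    have h2 : (2:K) ≠ 0 := two_ne_zero
    field_simp at ht' ⊢
    rw [map_div₀, map_one, map_ofNat, eq_div_iff h2]; linear_combination -ht'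
  rw [heq] at hint
  rw [isIntegral_algebraMap_iff ((algebraMap ℚ K).injective)] at hint
  obtain ⟨z, hz⟩ := IsIntegrallyClosed.isIntegral_iff.mp hint
  have hz' : (z : ℚ) = 1/2 := hz
  have h1 : ((2*z : ℤ) : ℚ) = 1 := by push_cast; linarith
  have h2 : (2*z : ℤ) = 1 := by exact_mod_cast h1
  omega

lemma two_ne : (2 : OK) ≠ 0 := fun h =>
  two_ne_zero (α := K) (by rw [← map_ofNat (algebraMap OK K) 2, h, map_zero])

lemma sixteen_ne : (16 : OK) ≠ 0 := fun h => by
  have : (16 : K) = 0 := by rw [← map_ofNat (algebraMap OK K) 16, h, map_zero]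
  norm_num at this

lemma thirtytwo_ne : (32 : OK) ≠ 0 := fun h => by
  have : (32 : K) = 0 := by rw [← map_ofNat (algebraMap OK K) 32, h, map_zero]
  norm_num at this

lemma cong_mul {n x x' y y' : OK} (hx : n ∣ x - x') (hy : n ∣ y - y') :
    n ∣ x * y - x' * y' := by
  obtain ⟨a, ha⟩ := hx; obtain ⟨b, hb⟩ := hy
  exact ⟨a * y + x' * b, by linear_combination y * ha + x' * hb⟩

lemma not4dvd_s : ¬ (4 : OK) ∣ (2 + 2 * u) := by
  rintro ⟨w, hw⟩
  apply not2dvd1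
  have h2 : 1 + u = 2 * w := by
    apply mul_left_cancel₀ two_ne
    linear_combination hw
  exact ⟨w * (u - 1) ^ 2, by linear_combination (u - 1) ^ 2 * h2 - u * hu⟩

lemma not4dvd_u : ¬ (4 : OK) ∣ (2 * u) := by
  rintro ⟨w, hw⟩
  apply not2dvd1
  have h2 : u = 2 * w := by
    apply mul_left_cancel₀ two_ne
    linear_combination hw
  exact ⟨w * (u - 1), by linear_combination (u - 1) * h2 - hu⟩

/-- The common computation for each congruence case. -/
lemma main_case (A B C A₀ B₀ s₀ t₀ k₁ k₂ k₃ : OK)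
    (hA4 : (4 : OK) ∣ A - A₀) (hB4 : (4 : OK) ∣ B - B₀)
    (hsum : A + B + C = 0)
    (ht₀ : s₀ = 2 * t₀)
    (hns : ¬ (4 : OK) ∣ s₀)
    (hIs : A₀ ^ 2 + A₀ * B₀ + B₀ ^ 2 = s₀ + 4 * k₁)
    (hIp : (A₀ - B₀) * (B₀ - (-(A₀ + B₀))) * ((-(A₀ + B₀)) - A₀) = 1 + 2 * k₂)
    (hIm : (A₀ * B₀ * (-(A₀ + B₀))) ^ 2 = 1 + 2 * k₃) :
    ((2 : OK) ^ 5 ∣ 16 * (A ^ 2 + A * B + B ^ 2) ∧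
      ¬ (2 : OK) ^ 6 ∣ 16 * (A ^ 2 + A * B + B ^ 2)) ∧
    ((2 : OK) ^ 5 ∣ -32 * (A - B) * (B - C) * (C - A) ∧
      ¬ (2 : OK) ^ 6 ∣ -32 * (A - B) * (B - C) * (C - A)) ∧
    ((2 : OK) ^ 4 ∣ 16 * (A * B * C) ^ 2 ∧
      ¬ (2 : OK) ^ 5 ∣ 16 * (A * B * C) ^ 2) := by
  set C₀ : OK := -(A₀ + B₀) with hC₀
  have hA2 : (2 : OK) ∣ A - A₀ := dvd_trans ⟨2, by norm_num⟩ hA4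
  have hB2 : (2 : OK) ∣ B - B₀ := dvd_trans ⟨2, by norm_num⟩ hB4
  have hC2 : (2 : OK) ∣ C - C₀ := by
    obtain ⟨x, hx⟩ := hA2; obtain ⟨y, hy⟩ := hB2
    exact ⟨-x - y, by linear_combination -hx - hy + hsum⟩
  refine ⟨?_, ?_, ?_⟩
  · -- c₄
    have hS4 : (4 : OK) ∣ (A ^ 2 + A * B + B ^ 2) - (A₀ ^ 2 + A₀ * B₀ + B₀ ^ 2) := by
      rw [show (A ^ 2 + A * B + B ^ 2) - (A₀ ^ 2 + A₀ * B₀ + B₀ ^ 2) =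
        (A * A - A₀ * A₀) + (A * B - A₀ * B₀) + (B * B - B₀ * B₀) by ring]
      exact dvd_add (dvd_add (cong_mul hA4 hA4) (cong_mul hA4 hB4)) (cong_mul hB4 hB4)
    obtain ⟨r, hr⟩ := hS4
    have hR : A ^ 2 + A * B + B ^ 2 - s₀ = 4 * (r + k₁) := by
      linear_combination hr + hIs
    constructor
    · exact ⟨t₀ + 2 * (r + k₁), by linear_combination 16 * hR + 16 * ht₀⟩
    · rintro ⟨w, hw⟩
      apply hns
      refine ⟨w - (r + k₁), ?_⟩
      apply mul_left_cancel₀ sixteen_ne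
      linear_combination hw - 16 * hR
  · -- c₆
    have h1 : (2 : OK) ∣ (A - B) - (A₀ - B₀) := by
      obtain ⟨x, hx⟩ := hA2; obtain ⟨y, hy⟩ := hB2
      exact ⟨x - y, by linear_combination hx - hy⟩
    have h2 : (2 : OK) ∣ (B - C) - (B₀ - C₀) := by
      obtain ⟨x, hx⟩ := hB2; obtain ⟨y, hy⟩ := hC2
      exact ⟨x - y, by linear_combination hx - hy⟩
    have h3 : (2 : OK) ∣ (C - A) - (C₀ - A₀) := by
      obtain ⟨x, hx⟩ := hC2; obtain ⟨y, hy⟩ := hA2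
      exact ⟨x - y, by linear_combination hx - hy⟩
    obtain ⟨r, hr⟩ := cong_mul (cong_mul h1 h2) h3
    have hQ : (A - B) * (B - C) * (C - A) - 1 = 2 * (r + k₂) := by
      linear_combination hr + hIp
    constructor
    · exact ⟨-((A - B) * (B - C) * (C - A)), by ring⟩
    · rintro ⟨w, hw⟩
      apply not2dvd1
      refine ⟨-(w + (r + k₂)), ?_⟩
      apply mul_left_cancel₀ thirtytwo_ne
      linear_combination -hw - 32 * hQ
  · -- Δ
    have hABC : (2 : OK) ∣ A * B * C - A₀ * B₀ * C₀ := cong_mul (cong_mul hA2 hB2) hC2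
    have hM2 : (2 : OK) ∣ (A * B * C) ^ 2 - (A₀ * B₀ * C₀) ^ 2 := by
      rw [show (A * B * C) ^ 2 - (A₀ * B₀ * C₀) ^ 2 =
        (A * B * C) * (A * B * C) - (A₀ * B₀ * C₀) * (A₀ * B₀ * C₀) by ring]
      exact cong_mul hABC hABC
    obtain ⟨r, hr⟩ := hM2
    have hN : (A * B * C) ^ 2 - 1 = 2 * (r + k₃) := by
      linear_combination hr + hIm
    constructor
    · exact ⟨(A * B * C) ^ 2, by ring⟩
    · rintro ⟨w, hw⟩
      apply not2dvd1
      refine ⟨w - (r + k₃), ?_⟩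
      apply mul_left_cancel₀ sixteen_ne
      linear_combination hw - 16 * hN

lemma combined (A B C : OK) (hsum : A + B + C = 0)
    (hAB : ((4 : OK) ∣ A - 3 ∧ (4 : OK) ∣ B - u ^ 2) ∨
      ((4 : OK) ∣ A - 1 ∧ (4 : OK) ∣ B - u) ∨
      ((4 : OK) ∣ A - 1 ∧ (4 : OK) ∣ B - (u ^ 2 + 2 * u))) :
    ((2 : OK) ^ 5 ∣ 16 * (A ^ 2 + A * B + B ^ 2) ∧
      ¬ (2 : OK) ^ 6 ∣ 16 * (A ^ 2 + A * B + B ^ 2)) ∧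
    ((2 : OK) ^ 5 ∣ -32 * (A - B) * (B - C) * (C - A) ∧
      ¬ (2 : OK) ^ 6 ∣ -32 * (A - B) * (B - C) * (C - A)) ∧
    ((2 : OK) ^ 4 ∣ 16 * (A * B * C) ^ 2 ∧
      ¬ (2 : OK) ^ 5 ∣ 16 * (A * B * C) ^ 2) := by
  rcases hAB with ⟨h1, h2⟩ | ⟨h1, h2⟩ | ⟨h1, h2⟩
  · rw [hu] at h2
    exact main_case A B C 3 (1 + u) (2 + 2 * u) (1 + u) (3 + u) (-27 + 8 * u) (274 + 432 * u)
      h1 h2 hsum (by ring) not4dvd_s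
      (by linear_combination hu)
      (by linear_combination (2 * u + 17) * hu)
      (by linear_combination (9 * u ^ 2 + 99 * u + 405) * hu)
  · exact main_case A B C 1 u (2 + 2 * u) (1 + u) 0 (1 + 2 * u) (2 + 4 * u)
      h1 h2 hsum (by ring) not4dvd_s
      (by linear_combination hu)
      (by linear_combination (2 * u + 5) * hu)
      (by linear_combination (u ^ 2 + 3 * u + 5) * hu)
  · rw [show B - (u ^ 2 + 2 * u) = B - (1 + 3 * u) from by linear_combination -hu] at h2
    exact main_case A B C 1 (1 + 3 * u) (2 * u) u (3 + 4 * u) (67 + 108 * u) (222 + 360 * u)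
      h1 h2 hsum (by ring) not4dvd_u
      (by linear_combination 9 * hu)
      (by linear_combination (54 * u + 135) * hu)
      (by linear_combination (81 * u ^ 2 + 243 * u + 441) * hu)

set_option maxHeartbeats 1000000 in
/-- **Lemma 3 (2.2), computation.** Let `p ≥ 11` be prime and `a, b, c` nonzero
coprime elements of `O_K` with `a^p + b^p + c^p = 0` and `2 ∤ a·b·c`.  With
`A = a^p`, `B = b^p`, `C = c^p`, if `(A, B)` is congruent mod `4·O_K` to one of
`(3, u²)`, `(1, u)`, `(1, u² + 2u)`, then for the valuation `v` attached to the
prime ideal `2·O_K` (so `v(x) = n` iff `2^n ∣ x` and `2^(n+1) ∤ x`) one has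
`v(c₄) = 5`, `v(c₆) = 5` and `v(Δ) = 4`, where `c₄ = 16(A² + AB + B²)`,
`c₆ = -32(A - B)(B - C)(C - A)` and `Δ = 16(ABC)²`. -/
theorem valuations_at_P2_odd_case_two (p : ℕ) (hp : p.Prime) (hp11 : 11 ≤ p)
    (a b c : OK) (ha : a ≠ 0) (hb : b ≠ 0) (hc : c ≠ 0)
    (hcop : ∀ d : OK, d ∣ a → d ∣ b → d ∣ c → IsUnit d)
    (hfermat : a ^ p + b ^ p + c ^ p = 0)
    (h2abc : ¬ (2 : OK) ∣ a * b * c)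
    (A B C : OK) (hA : A = a ^ p) (hB : B = b ^ p) (hC : C = c ^ p)
    (hAB : ((4 : OK) ∣ A - 3 ∧ (4 : OK) ∣ B - u ^ 2) ∨
      ((4 : OK) ∣ A - 1 ∧ (4 : OK) ∣ B - u) ∨
      ((4 : OK) ∣ A - 1 ∧ (4 : OK) ∣ B - (u ^ 2 + 2 * u))) :
    ((2 : OK) ^ 5 ∣ 16 * (A ^ 2 + A * B + B ^ 2) ∧
      ¬ (2 : OK) ^ 6 ∣ 16 * (A ^ 2 + A * B + B ^ 2)) ∧
    ((2 : OK) ^ 5 ∣ -32 * (A - B) * (B - C) * (C - A) ∧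
      ¬ (2 : OK) ^ 6 ∣ -32 * (A - B) * (B - C) * (C - A)) ∧
    ((2 : OK) ^ 4 ∣ 16 * (A * B * C) ^ 2 ∧
      ¬ (2 : OK) ^ 5 ∣ 16 * (A * B * C) ^ 2) := by
  refine combined A B C ?_ hAB
  rw [hA, hB, hC]
  exact hfermat
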